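/- arXiv:1510.05199 — 2 statements merged into one kernel-verified Lean document; each statement's English description precedes it below -/
import Mathlib

section
/- Let (Ω, A) be a compatible pair with associated norm function ρ. Then ρ is continuous on ℝ², and {ξ : ρ(ξ) < 1} = Ω, {ξ : ρ(ξ) = 1} = ∂Ω. -/
open Matrix Filter Set Topology

/-- The nonisotropic dilation `t^A = exp((log t) A)`. -/
noncomputable def dil (A : Matrix (Fin 2) (Fin 2) ℝ) (t : ℝ) : Matrix (Fin 2) (Fin 2) ℝ :=
  NormedSpace.exp (Real.log t • A)

lemma trace_det_pos (A : Matrix (Fin 2) (Fin 2) ℝ)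
    (hA : ∀ μ ∈ spectrum ℂ (A.map (algebraMap ℝ ℂ)), 0 < μ.re) :
    0 < A 0 0 + A 1 1 ∧ 0 < A 0 0 * A 1 1 - A 0 1 * A 1 0 := by
  set a := A 0 0; set b := A 0 1; set c := A 1 0; set d := A 1 1
  set τ : ℝ := a + d with hτ
  set δ : ℝ := a * d - b * c with hδ
  have hτc : (τ:ℂ) = (a:ℂ) + d := by rw [hτ]; push_cast; ring
  have hδc : (δ:ℂ) = (a:ℂ)*d - (b:ℂ)*c := by rw [hδ]; push_cast; ring
  obtain ⟨s, hs⟩ := IsAlgClosed.exists_pow_nat_eq (k := ℂ) ((τ:ℂ)^2 - 4*δ) (n := 2) (by norm_num)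
  have mem : ∀ r : ℂ, r^2 - τ*r + δ = 0 → r ∈ spectrum ℂ (A.map (algebraMap ℝ ℂ)) := by
    intro r hr
    rw [spectrum.mem_iff, Matrix.isUnit_iff_isUnit_det, isUnit_iff_ne_zero]
    intro hdet
    apply hdet
    have h2 : ((algebraMap ℂ (Matrix (Fin 2) (Fin 2) ℂ)) r - A.map (algebraMap ℝ ℂ)).det
        = (r - a)*(r - d) - b*c := by
      rw [Matrix.det_fin_two]
      simp [Matrix.algebraMap_matrix_apply, Matrix.map_apply]
      rfl
    rw [h2]; linear_combination hr + r * hτc - hδc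
  have h1 := hA _ (mem ((τ + s)/2) (by linear_combination (1/4 : ℂ) * hs))
  have h2 := hA _ (mem ((τ - s)/2) (by linear_combination (1/4 : ℂ) * hs))
  have e1 : ((↑τ + s)/2 : ℂ).re = (τ + s.re)/2 := by
    simp [Complex.add_re, Complex.div_re, Complex.normSq]
  have e2 : ((↑τ - s)/2 : ℂ).re = (τ - s.re)/2 := by
    simp [Complex.sub_re, Complex.div_re, Complex.normSq]
  rw [e1] at h1; rw [e2] at h2
  have hre := congrArg Complex.re hs
  simp [pow_two, Complex.mul_re, Complex.sub_re, Complex.ofReal_re] at hre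
  constructor <;> nlinarith [sq_nonneg s.im, h1, h2, hre]

section decay
attribute [local instance] Matrix.linftyOpNormedRing Matrix.linftyOpNormedAlgebra

lemma mulVec_two (M : Matrix (Fin 2) (Fin 2) ℝ) (v : Fin 2 → ℝ) (i : Fin 2) :
    M.mulVec v i = M i 0 * v 0 + M i 1 * v 1 := by
  simp [Matrix.mulVec, dotProduct, Fin.sum_univ_two]

lemma hasDerivAt_exp_mulVec (B : Matrix (Fin 2) (Fin 2) ℝ) (ξ : Fin 2 → ℝ) (i : Fin 2) (u : ℝ) :
    HasDerivAt (fun u : ℝ => (NormedSpace.exp (u • B)).mulVec ξ i)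
      (B.mulVec ((NormedSpace.exp (u • B)).mulVec ξ) i) u := by
  have hlin : IsLinearMap ℝ (fun M : Matrix (Fin 2) (Fin 2) ℝ => M.mulVec ξ i) := by
    constructor <;> intros <;> simp [Matrix.add_mulVec, Matrix.smul_mulVec]
  set L := LinearMap.toContinuousLinearMap (hlin.mk' _)
  have hL : ∀ M, L M = M.mulVec ξ i := fun _ => rfl
  have h := (L.hasFDerivAt.comp_hasDerivAt u (hasDerivAt_exp_smul_const' B u))
  simp only [Function.comp_def] at h
  refine h.congr_deriv ?_
  show (B * NormedSpace.exp (u • B)).mulVec ξ i = _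
  rw [← Matrix.mulVec_mulVec]

set_option maxHeartbeats 2000000 in
lemma exp_decay (A : Matrix (Fin 2) (Fin 2) ℝ)
    (hτ : 0 < A 0 0 + A 1 1) (hδ : 0 < A 0 0 * A 1 1 - A 0 1 * A 1 0) (ξ : Fin 2 → ℝ) :
    Tendsto (fun u : ℝ => (NormedSpace.exp (u • (-A))).mulVec ξ) atTop (𝓝 0) := by
  set a := A 0 0 with ha; set b := A 0 1 with hb; set c := A 1 0 with hc; set d := A 1 1 with hd
  set τ : ℝ := a + d with hτ'
  set δ : ℝ := a * d - b * c with hδ'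
  set S : ℝ := a^2 + b^2 + c^2 + d^2 with hS
  have hSδ : 0 < S + δ := by positivity
  set k : ℝ := 2*τ*δ/(S+δ) with hk
  have hkpos : 0 < k := by positivity
  set x : ℝ → Fin 2 → ℝ := fun u => (NormedSpace.exp (u • (-A))).mulVec ξ with hx
  set y : ℝ → Fin 2 → ℝ := fun u => A.mulVec (x u) with hy
  have hxd : ∀ i u, HasDerivAt (fun u => x u i) (-(y u i)) u := by
    intro i u
    have h := hasDerivAt_exp_mulVec (-A) ξ i u
    convert h using 1
    rw [Matrix.neg_mulVec]
    rfl
  have hyd : ∀ i u, HasDerivAt (fun u => y u i) (-(A.mulVec (y u) i)) u := by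
    intro i u
    have h : HasDerivAt (fun u => A i 0 * x u 0 + A i 1 * x u 1)
        (A i 0 * (-(y u 0)) + A i 1 * (-(y u 1))) u :=
      ((hxd 0 u).const_mul _).add ((hxd 1 u).const_mul _)
    have e : (fun u => y u i) = fun u => A i 0 * x u 0 + A i 1 * x u 1 := by
      funext v; rw [hy]; exact mulVec_two A (x v) i
    rw [e]
    convert h using 1
    rw [mulVec_two]; ring
  set V : ℝ → ℝ := fun u => δ * (x u 0^2 + x u 1^2) + (y u 0^2 + y u 1^2) with hV
  have hVd : ∀ u, HasDerivAt V (-(2*τ) * (y u 0^2 + y u 1^2)) u := by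
    intro u
    have h : HasDerivAt V
        (δ * (2 * x u 0 * (-(y u 0)) + 2 * x u 1 * (-(y u 1))) +
          (2 * y u 0 * (-(A.mulVec (y u) 0)) + 2 * y u 1 * (-(A.mulVec (y u) 1)))) u := by
      apply HasDerivAt.add
      · exact (((hxd 0 u).pow 2).add ((hxd 1 u).pow 2)).const_mul δ |>.congr_deriv (by ring)
      · exact (((hyd 0 u).pow 2).add ((hyd 1 u).pow 2)).congr_deriv (by ring)
    convert h using 1
    have e0 : y u 0 = a * x u 0 + b * x u 1 := mulVec_two A (x u) 0
    have e1 : y u 1 = c * x u 0 + d * x u 1 := mulVec_two A (x u) 1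
    have f0 : A.mulVec (y u) 0 = a * y u 0 + b * y u 1 := mulVec_two A (y u) 0
    have f1 : A.mulVec (y u) 1 = c * y u 0 + d * y u 1 := mulVec_two A (y u) 1
    rw [f0, f1, e0, e1]; ring
  -- key inequality : derivative + k * V ≤ 0
  have key : ∀ u, -(2*τ) * (y u 0^2 + y u 1^2) + k * V u ≤ 0 := by
    intro u
    have e0 : y u 0 = a * x u 0 + b * x u 1 := mulVec_two A (x u) 0
    have e1 : y u 1 = c * x u 0 + d * x u 1 := mulVec_two A (x u) 1
    have P : δ^2 * (x u 0^2 + x u 1^2) ≤ S * (y u 0^2 + y u 1^2) := by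
      rw [e0, e1, hS, hδ']
      nlinarith [sq_nonneg (b * (a * x u 0 + b * x u 1) + d * (c * x u 0 + d * x u 1)),
        sq_nonneg (a * (a * x u 0 + b * x u 1) + c * (c * x u 0 + d * x u 1)),
        sq_nonneg (a * x u 0 + b * x u 1), sq_nonneg (c * x u 0 + d * x u 1)]
    have hkV : k * V u ≤ 2*τ*(y u 0^2 + y u 1^2) := by
      simp only [hk, hV]
      rw [div_mul_eq_mul_div, div_le_iff₀ hSδ]
      nlinarith [mul_le_mul_of_nonneg_left P (by positivity : (0:ℝ) ≤ 2*τ)]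
    linarith
  set g : ℝ → ℝ := fun u => V u * Real.exp (k * u) with hg
  have hgd : ∀ u, HasDerivAt g ((-(2*τ) * (y u 0^2 + y u 1^2) + k * V u) * Real.exp (k*u)) u := by
    intro u
    have he : HasDerivAt (fun u : ℝ => Real.exp (k*u)) (Real.exp (k*u) * k) u := by
      simpa using ((hasDerivAt_id u).const_mul k).exp
    exact ((hVd u).mul he).congr_deriv (by ring)
  have hanti : Antitone g := by
    apply antitone_of_deriv_nonpos
    · intro u; exact (hgd u).differentiableAt
    · intro u
      rw [(hgd u).deriv]
      exact mul_nonpos_of_nonpos_of_nonneg (key u) (Real.exp_nonneg _)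
  have hV0 : ∀ u, 0 ≤ V u := by
    intro u
    simp only [hV]
    have h6 : (0:ℝ) ≤ x u 0^2 + x u 1^2 := by positivity
    nlinarith [sq_nonneg (y u 0), sq_nonneg (y u 1), mul_nonneg hδ.le h6]
  have hVb : ∀ u : ℝ, 0 ≤ u → V u ≤ V 0 * Real.exp (-(k*u)) := by
    intro u hu
    have h1 : V u * Real.exp (k*u) ≤ V 0 := by
      have := hanti hu
      simpa [hg] using this
    have h2 := mul_le_mul_of_nonneg_right h1 (Real.exp_nonneg (-(k*u)))
    calc V u = V u * Real.exp (k*u) * Real.exp (-(k*u)) := by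
              rw [mul_assoc, ← Real.exp_add]; simp
      _ ≤ V 0 * Real.exp (-(k*u)) := h2
  have hVtends : Tendsto V atTop (𝓝 0) := by
    have h2 : Tendsto (fun u : ℝ => k*u) atTop atTop :=
      Tendsto.const_mul_atTop hkpos tendsto_id
    have h3 : Tendsto (fun u : ℝ => V 0 * Real.exp (-(k*u))) atTop (𝓝 0) := by
      have h4 : Tendsto (fun u : ℝ => Real.exp (-(k*u))) atTop (𝓝 0) :=
        Real.tendsto_exp_atBot.comp (tendsto_neg_atTop_atBot.comp h2)
      simpa using h4.const_mul (V 0)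
    exact squeeze_zero' (Eventually.of_forall hV0)
      ((eventually_ge_atTop (0:ℝ)).mono hVb) h3
  have hsum : Tendsto (fun u => x u 0 ^ 2 + x u 1 ^ 2) atTop (𝓝 0) := by
    have hd : Tendsto (fun u => V u / δ) atTop (𝓝 0) := by
      simpa using hVtends.div_const δ
    refine squeeze_zero (fun u => by positivity) (fun u => ?_) hd
    rw [le_div_iff₀ hδ]
    simp only [hV]
    nlinarith [sq_nonneg (y u 0), sq_nonneg (y u 1)]
  clear_value x y V g
  rw [tendsto_pi_nhds]
  intro i
  have hsq : Tendsto (fun u => x u i ^ 2) atTop (𝓝 0) := by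
    have hi : i = 0 ∨ i = 1 := by omega
    refine squeeze_zero (fun u => sq_nonneg _) (fun u => ?_) hsum
    rcases hi with rfl | rfl
    · nlinarith [sq_nonneg (x u 1)]
    · nlinarith [sq_nonneg (x u 0)]
  have habs : Tendsto (fun u => |x u i|) atTop (𝓝 0) := by
    have h5 := (Real.continuous_sqrt.tendsto' 0 0 Real.sqrt_zero).comp hsq
    simpa [Function.comp_def, Real.sqrt_sq_eq_abs] using h5
  have h7 := (tendsto_zero_iff_abs_tendsto_zero (fun u => x u i)).mpr habs
  simpa using h7

section dil1
attribute [local instance] Matrix.linftyOpNormedRing Matrix.linftyOpNormedAlgebra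
lemma dil_one (A : Matrix (Fin 2) (Fin 2) ℝ) : dil A 1 = 1 := by
  rw [dil, Real.log_one, zero_smul]
  exact NormedSpace.exp_zero
end dil1

lemma dil_mul (A : Matrix (Fin 2) (Fin 2) ℝ) {s t : ℝ} (hs : 0 < s) (ht : 0 < t) :
    dil A s * dil A t = dil A (s * t) := by
  rw [dil, dil, dil, Real.log_mul hs.ne' ht.ne', add_smul]
  exact (Matrix.exp_add_of_commute _ _ (((Commute.refl A).smul_left _).smul_right _)).symm

lemma dil_cancel (A : Matrix (Fin 2) (Fin 2) ℝ) {t : ℝ} (ht : 0 < t) (ξ : Fin 2 → ℝ) :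
    (dil A t⁻¹).mulVec ((dil A t).mulVec ξ) = ξ := by
  rw [Matrix.mulVec_mulVec, dil_mul A (inv_pos.mpr ht) ht, inv_mul_cancel₀ ht.ne',
    dil_one, Matrix.one_mulVec]

lemma dil_exp (A : Matrix (Fin 2) (Fin 2) ℝ) (u : ℝ) :
    dil A (Real.exp u) = NormedSpace.exp (u • A) := by
  rw [dil, Real.log_exp]

lemma dil_ne_zero (A : Matrix (Fin 2) (Fin 2) ℝ) {t : ℝ} (ht : 0 < t) {ξ : Fin 2 → ℝ}
    (hξ : ξ ≠ 0) : (dil A t).mulVec ξ ≠ 0 := by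
  intro h
  apply hξ
  have := dil_cancel A ht ξ
  rw [h, Matrix.mulVec_zero] at this
  exact this.symm

section cont
attribute [local instance] Matrix.linftyOpNormedRing Matrix.linftyOpNormedAlgebra

lemma mulVecCLM_cont (ξ : Fin 2 → ℝ) :
    Continuous (fun M : Matrix (Fin 2) (Fin 2) ℝ => M.mulVec ξ) := by
  have hlin : IsLinearMap ℝ (fun M : Matrix (Fin 2) (Fin 2) ℝ => M.mulVec ξ) := by
    constructor <;> intros <;> funext i <;>
      simp [Matrix.add_mulVec, Matrix.smul_mulVec]
  exact LinearMap.continuous_of_finiteDimensional (hlin.mk' _)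

lemma dil_continuousOn (A : Matrix (Fin 2) (Fin 2) ℝ) (ξ : Fin 2 → ℝ) :
    ContinuousOn (fun t : ℝ => (dil A t).mulVec ξ) (Ioi 0) := by
  have h1 : ContinuousOn (fun t : ℝ => Real.log t • A) (Ioi 0) :=
    (Real.continuousOn_log.mono (fun x hx => ne_of_gt hx)).smul continuousOn_const
  have h2 : ContinuousOn (fun t : ℝ => NormedSpace.exp (Real.log t • A)) (Ioi 0) :=
    NormedSpace.exp_continuous.comp_continuousOn h1
  exact (mulVecCLM_cont ξ).comp_continuousOn h2

lemma exp_neg_mul_exp (B : Matrix (Fin 2) (Fin 2) ℝ) :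
    NormedSpace.exp (-B) * NormedSpace.exp B = 1 := by
  rw [← Matrix.exp_add_of_commute _ _ ((Commute.refl B).neg_left), neg_add_cancel]
  exact NormedSpace.exp_zero

end cont

lemma escape (A : Matrix (Fin 2) (Fin 2) ℝ)
    (hτ : 0 < A 0 0 + A 1 1) (hδ : 0 < A 0 0 * A 1 1 - A 0 1 * A 1 0)
    {ξ : Fin 2 → ℝ} (hξ : ξ ≠ 0) (R : ℝ) (t₁ : ℝ) (ht₁ : 0 < t₁)
    (h : ∀ t, t₁ < t → ∀ i, |(dil A t).mulVec ξ i| ≤ R) : False := by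
  set m : ℝ → Matrix (Fin 2) (Fin 2) ℝ := fun u => NormedSpace.exp (u • (-A)) with hm
  have hentry : ∀ i j, Tendsto (fun u => m u i j) atTop (𝓝 0) := by
    intro i j
    have h1 := tendsto_pi_nhds.mp (exp_decay A hτ hδ (Pi.single j 1)) i
    simpa [hm, Matrix.mulVec_single, smul_neg] using h1
  have hid : ∀ u : ℝ, ∀ i, ξ i = m u i 0 * (dil A (Real.exp u)).mulVec ξ 0
      + m u i 1 * (dil A (Real.exp u)).mulVec ξ 1 := by
    intro u i
    have e1 : (m u).mulVec ((dil A (Real.exp u)).mulVec ξ) = ξ := by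
      rw [dil_exp, Matrix.mulVec_mulVec]
      simp only [hm]
      rw [smul_neg, exp_neg_mul_exp, Matrix.one_mulVec]
    conv_lhs => rw [← e1]
    exact mulVec_two (m u) _ i
  have hbound : ∀ i, ∀ u, Real.log t₁ < u →
      |ξ i| ≤ |m u i 0| * R + |m u i 1| * R := by
    intro i u hu
    have htlt : t₁ < Real.exp u := by
      rw [← Real.exp_log ht₁]
      exact Real.exp_lt_exp.mpr hu
    have hb := h (Real.exp u) htlt
    have hR : 0 ≤ R := le_trans (abs_nonneg _) (hb 0)
    rw [hid u i]
    calc |m u i 0 * (dil A (Real.exp u)).mulVec ξ 0 + m u i 1 * (dil A (Real.exp u)).mulVec ξ 1|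
        ≤ |m u i 0 * (dil A (Real.exp u)).mulVec ξ 0| + |m u i 1 * (dil A (Real.exp u)).mulVec ξ 1| :=
          abs_add_le _ _
      _ ≤ |m u i 0| * R + |m u i 1| * R := by
          rw [abs_mul, abs_mul]
          gcongr <;> [exact hb 0; exact hb 1]
  have hzero : ∀ i, ξ i = 0 := by
    intro i
    have h3 : Tendsto (fun u => |m u i 0| * R + |m u i 1| * R) atTop (𝓝 0) := by
      have := (((hentry i 0).abs.mul_const R).add ((hentry i 1).abs.mul_const R))
      simpa using this
    have h4 : |ξ i| ≤ 0 :=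
      ge_of_tendsto h3 ((eventually_gt_atTop (Real.log t₁)).mono (fun u hu => hbound i u hu))
    exact abs_eq_zero.mp (le_antisymm h4 (abs_nonneg _))
  exact hξ (funext hzero)

lemma cont_mulVec (M : Matrix (Fin 2) (Fin 2) ℝ) :
    Continuous (fun ξ : Fin 2 → ℝ => M.mulVec ξ) := by
  have : (fun ξ : Fin 2 → ℝ => M.mulVec ξ) = M.mulVecLin := by
    funext ξ; rw [Matrix.mulVecLin_apply]
  rw [this]
  exact LinearMap.continuous_of_finiteDimensional _

theorem rho_continuous_and_level_sets (Ω : Set (Fin 2 → ℝ))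
    (hΩo : IsOpen Ω) (hΩc : Convex ℝ Ω) (hΩb : Bornology.IsBounded Ω)
    (h0 : (0 : Fin 2 → ℝ) ∈ Ω)
    (A : Matrix (Fin 2) (Fin 2) ℝ)
    (hA : ∀ μ ∈ spectrum ℂ (A.map (algebraMap ℝ ℂ)), 0 < μ.re)
    (hcompat : ∀ ξ : Fin 2 → ℝ, ξ ≠ 0 →
      ∃! t : ℝ, 0 < t ∧ (dil A t).mulVec ξ ∈ frontier Ω)
    (ρ : (Fin 2 → ℝ) → ℝ) (hρ0 : ρ 0 = 0)
    (hρ : ∀ ξ : Fin 2 → ℝ, ξ ≠ 0 →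
      0 < ρ ξ ∧ (dil A (ρ ξ)⁻¹).mulVec ξ ∈ frontier Ω) :
    Continuous ρ ∧ {ξ | ρ ξ < 1} = Ω ∧ {ξ | ρ ξ = 1} = frontier Ω := by
  obtain ⟨hτ, hδ⟩ := trace_det_pos A hA
  obtain ⟨R, hR⟩ := (hΩb.closure).subset_closedBall (0 : Fin 2 → ℝ)
  have hRb : ∀ v ∈ closure Ω, ∀ i, |v i| ≤ R := by
    intro v hv i
    have h1 := hR hv
    rw [Metric.mem_closedBall, dist_zero_right] at h1
    calc |v i| = ‖v i‖ := (Real.norm_eq_abs _).symm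
      _ ≤ ‖v‖ := norm_le_pi_norm v i
      _ ≤ R := h1
  have hdisj : Disjoint Ω (closure Ω)ᶜ :=
    Set.disjoint_left.mpr fun x hx hx' => hx' (subset_closure hx)
  have main : ∀ ξ : Fin 2 → ℝ, ξ ≠ 0 →
      (∀ t, 0 < t → t < (ρ ξ)⁻¹ → (dil A t).mulVec ξ ∈ Ω) ∧
      (∀ t, (ρ ξ)⁻¹ < t → (dil A t).mulVec ξ ∉ closure Ω) := by
    intro ξ hξ
    obtain ⟨hρpos, hρfr⟩ := hρ ξ hξ
    set t₀ := (ρ ξ)⁻¹ with ht₀def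
    have ht₀ : 0 < t₀ := inv_pos.mpr hρpos
    obtain ⟨t', ht', huniq⟩ := hcompat ξ hξ
    have ht₀t' : t₀ = t' := huniq t₀ ⟨ht₀, hρfr⟩
    have uniq : ∀ t, 0 < t → (dil A t).mulVec ξ ∈ frontier Ω → t = t₀ := fun t h1 h2 =>
      (huniq t ⟨h1, h2⟩).trans ht₀t'.symm
    have hsplit : ∀ t, 0 < t → t ≠ t₀ → (dil A t).mulVec ξ ∈ Ω ∪ (closure Ω)ᶜ := by
      intro t h1 h2
      by_cases hc : (dil A t).mulVec ξ ∈ closure Ω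
      · left
        by_contra hno
        exact h2 (uniq t h1 (by rw [hΩo.frontier_eq]; exact ⟨hc, hno⟩))
      · right; exact hc
    constructor
    · have hpre : IsPreconnected ((fun t => (dil A t).mulVec ξ) '' Ioo 0 t₀) :=
        (isPreconnected_Ioo).image _ ((dil_continuousOn A ξ).mono Ioo_subset_Ioi_self)
      have hsub : ((fun t => (dil A t).mulVec ξ) '' Ioo 0 t₀) ⊆ Ω ∪ (closure Ω)ᶜ := by
        rintro - ⟨t, ⟨h1, h2⟩, rfl⟩
        exact hsplit t h1 (ne_of_lt h2)
      have hne : (((fun t => (dil A t).mulVec ξ) '' Ioo 0 t₀) ∩ Ω).Nonempty := by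
        have hdec := exp_decay A hτ hδ ξ
        have hev1 : ∀ᶠ u : ℝ in atTop, (NormedSpace.exp (u • (-A))).mulVec ξ ∈ Ω :=
          hdec.eventually (hΩo.mem_nhds h0)
        have hexp0 : Tendsto (fun u : ℝ => Real.exp (-u)) atTop (𝓝 0) :=
          Real.tendsto_exp_atBot.comp tendsto_neg_atTop_atBot
        have hev2 : ∀ᶠ u : ℝ in atTop, Real.exp (-u) < t₀ :=
          hexp0.eventually (eventually_lt_nhds ht₀)
        obtain ⟨u, hu1, hu2⟩ := (hev1.and hev2).exists
        refine ⟨(dil A (Real.exp (-u))).mulVec ξ, ⟨Real.exp (-u), ⟨Real.exp_pos _, hu2⟩, rfl⟩, ?_⟩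
        rw [dil_exp, show (-u) • A = u • (-A) by rw [neg_smul, smul_neg]]
        exact hu1
      have hIn := hpre.subset_left_of_subset_union hΩo isClosed_closure.isOpen_compl
        hdisj hsub hne
      intro t h1 h2
      exact hIn ⟨t, ⟨h1, h2⟩, rfl⟩
    · have hpre : IsPreconnected ((fun t => (dil A t).mulVec ξ) '' Ioi t₀) :=
        (isPreconnected_Ioi).image _ ((dil_continuousOn A ξ).mono
          (fun x hx => lt_trans ht₀ hx))
      have hsub : ((fun t => (dil A t).mulVec ξ) '' Ioi t₀) ⊆ (closure Ω)ᶜ ∪ Ω := by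
        rintro - ⟨t, h2, rfl⟩
        exact (union_comm Ω _ ▸ hsplit t (lt_trans ht₀ h2) (ne_of_gt h2))
      have hne : (((fun t => (dil A t).mulVec ξ) '' Ioi t₀) ∩ (closure Ω)ᶜ).Nonempty := by
        by_contra hcon
        rw [not_nonempty_iff_eq_empty] at hcon
        refine escape A hτ hδ hξ R t₀ ht₀ ?_
        intro t ht i
        have hmem : (dil A t).mulVec ξ ∈ closure Ω := by
          by_contra hno
          exact (eq_empty_iff_forall_notMem.mp hcon _) ⟨⟨t, ht, rfl⟩, hno⟩
        exact hRb _ hmem i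
      have hOut := hpre.subset_left_of_subset_union isClosed_closure.isOpen_compl hΩo
        hdisj.symm hsub hne
      intro t h2
      exact hOut ⟨t, h2, rfl⟩
  have lt_mem : ∀ ξ, ρ ξ < 1 → ξ ∈ Ω := by
    intro ξ h
    by_cases hξ : ξ = 0
    · rwa [hξ]
    · have h1 := (main ξ hξ).1 1 one_pos ((one_lt_inv₀ (hρ ξ hξ).1).mpr h)
      rwa [dil_one, Matrix.one_mulVec] at h1
  have eq_mem : ∀ ξ, ρ ξ = 1 → ξ ∈ frontier Ω := by
    intro ξ h
    have hξ : ξ ≠ 0 := by intro h0'; rw [h0', hρ0] at h; norm_num at h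
    have h2 := (hρ ξ hξ).2
    rw [h, inv_one, dil_one, Matrix.one_mulVec] at h2
    exact h2
  have gt_mem : ∀ ξ, 1 < ρ ξ → ξ ∉ closure Ω := by
    intro ξ h
    have hξ : ξ ≠ 0 := by intro h0'; rw [h0', hρ0] at h; norm_num at h
    have h1 := (main ξ hξ).2 1 (inv_lt_one_of_one_lt₀ h)
    rwa [dil_one, Matrix.one_mulVec] at h1
  have setΩ : {ξ | ρ ξ < 1} = Ω := by
    ext ξ
    simp only [mem_setOf_eq]
    constructor
    · exact fun h => lt_mem ξ h
    · intro hΩmem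
      by_contra hge
      push_neg at hge
      rcases eq_or_lt_of_le hge with heq | hgt
      · have h5 := eq_mem ξ heq.symm
        rw [hΩo.frontier_eq] at h5
        exact h5.2 hΩmem
      · exact gt_mem ξ hgt (subset_closure hΩmem)
  have setF : {ξ | ρ ξ = 1} = frontier Ω := by
    ext ξ
    simp only [mem_setOf_eq]
    constructor
    · exact fun h => eq_mem ξ h
    · intro hfr
      rcases lt_trichotomy (ρ ξ) 1 with h | h | h
      · exact absurd hfr (by rw [hΩo.frontier_eq]; exact fun hc => hc.2 (lt_mem ξ h))
      · exact h
      · exact absurd (frontier_subset_closure hfr) (gt_mem ξ h)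
  have hclos : closure Ω = {ξ | ρ ξ ≤ 1} := by
    rw [closure_eq_self_union_frontier, ← setF, ← setΩ]
    ext ξ
    simp only [mem_union, mem_setOf_eq]
    rw [le_iff_lt_or_eq]
  have hom : ∀ ξ, ξ ≠ 0 → ∀ s : ℝ, 0 < s → ρ ((dil A s).mulVec ξ) = s * ρ ξ := by
    intro ξ hξ s hs
    have hη := dil_ne_zero A hs hξ
    obtain ⟨hp2, hf2⟩ := hρ _ hη
    obtain ⟨hp1, hf1⟩ := hρ ξ hξ
    obtain ⟨t', ht', huniq⟩ := hcompat ξ hξ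
    have e2 : (dil A ((ρ ((dil A s).mulVec ξ))⁻¹ * s)).mulVec ξ ∈ frontier Ω := by
      rw [← dil_mul A (inv_pos.mpr hp2) hs, ← Matrix.mulVec_mulVec]
      exact hf2
    have h1 := huniq _ ⟨mul_pos (inv_pos.mpr hp2) hs, e2⟩
    have h2 := huniq _ ⟨inv_pos.mpr hp1, hf1⟩
    have h3 : (ρ ((dil A s).mulVec ξ))⁻¹ * s = (ρ ξ)⁻¹ := h1.trans h2.symm
    field_simp at h3
    linarith [h3]
  have hnn : ∀ ξ, 0 ≤ ρ ξ := by
    intro ξ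
    by_cases h : ξ = 0
    · rw [h, hρ0]
    · exact (hρ ξ h).1.le
  have hIio : ∀ b : ℝ, IsOpen {ξ | ρ ξ < b} := by
    intro b
    rcases le_or_gt b 0 with hb | hb
    · convert isOpen_empty
      ext ξ
      simp only [mem_setOf_eq, mem_empty_iff_false, iff_false, not_lt]
      exact le_trans hb (hnn ξ)
    · have heq : {ξ | ρ ξ < b} = (fun ξ => (dil A b⁻¹).mulVec ξ) ⁻¹' Ω := by
        ext ξ
        by_cases hξ : ξ = 0
        · simp [hξ, Matrix.mulVec_zero, hρ0, hb, h0]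
          convert h0 using 1; ext i; fin_cases i <;> rfl
        · rw [mem_preimage, ← setΩ]
          simp only [mem_setOf_eq]
          rw [hom ξ hξ b⁻¹ (inv_pos.mpr hb), inv_mul_lt_iff₀ hb, mul_one]
      rw [heq]
      exact hΩo.preimage (cont_mulVec _)
  have hIoi : ∀ a : ℝ, IsOpen {ξ | a < ρ ξ} := by
    intro a
    rcases lt_trichotomy a 0 with ha | ha | ha
    · convert isOpen_univ
      ext ξ
      simp only [mem_setOf_eq, mem_univ, iff_true]
      exact lt_of_lt_of_le ha (hnn ξ)
    · have heq : {ξ | a < ρ ξ} = ({(0 : Fin 2 → ℝ)}ᶜ : Set (Fin 2 → ℝ)) := by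
        ext ξ
        simp only [mem_setOf_eq, mem_compl_iff, mem_singleton_iff, ha]
        constructor
        · intro h h0'; rw [h0', hρ0] at h; exact lt_irrefl 0 h
        · intro h; exact (hρ ξ h).1
      rw [heq]
      exact isClosed_singleton.isOpen_compl
    · have heq : {ξ | a < ρ ξ} = (fun ξ => (dil A a⁻¹).mulVec ξ) ⁻¹' (closure Ω)ᶜ := by
        ext ξ
        by_cases hξ : ξ = 0
        · simp only [hξ, mem_setOf_eq, hρ0, mem_preimage, Matrix.mulVec_zero, mem_compl_iff]
          constructor
          · intro h; exact absurd h (not_lt.mpr ha.le)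
          · intro h; exact absurd (subset_closure h0) h
        · rw [mem_preimage, mem_compl_iff, hclos]
          simp only [mem_setOf_eq]
          rw [hom ξ hξ a⁻¹ (inv_pos.mpr ha), not_le, lt_inv_mul_iff₀ ha, mul_one]
      rw [heq]
      exact isClosed_closure.isOpen_compl.preimage (cont_mulVec _)
  have hcont : Continuous ρ := by
    nth_rewrite 2 [(OrderTopology.topology_eq_generate_intervals (α := ℝ))]
    rw [continuous_generateFrom_iff]
    rintro s ⟨a, rfl | rfl⟩
    · exact hIoi a
    · exact hIio a
  exact ⟨hcont, setΩ, setF⟩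
end decay
end

section
/- Let T : L²(ℝ²) → L²(ℝ²) be sublinear with ‖Tf‖₂ ≤ C₂ (log N)^{a+1/2} ‖f‖₂, weak-type (1,1) with constant C₁·N, and bounded on L^∞ with constant 1. Then T is bounded on L² (strong type) — and more generally, interpolation of the weak-type (2,2) bound |{Tf > α}| ≤ C (log N)^{2a+1} ‖f‖₂²/α², the weak (1,1) bound with constant CN, and the L^∞ bound yields ‖Tf‖₂ ≲ (log N)^{β} ‖f‖₂ for some β = β(a) > 0, with implied constant independent of N. -/
open MeasureTheory Real
open scoped ENNReal NNReal

private lemma ofReal_two_zpow (n : ℤ) : ENNReal.ofReal ((2:ℝ)^n) = (2:ℝ≥0∞)^n := by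
  cases n with
  | ofNat k =>
      rw [Int.ofNat_eq_coe, zpow_natCast, zpow_natCast,
        ENNReal.ofReal_pow (by norm_num)]
      norm_num
  | negSucc k =>
      rw [zpow_negSucc, zpow_negSucc, ENNReal.ofReal_inv_of_pos (by positivity),
        ENNReal.ofReal_pow (by norm_num)]
      norm_num

private lemma tsum_geom_cond_le (y : ℝ) :
    ∑' n : ℤ, (if (2:ℝ)^n < y then (2:ℝ≥0∞)^n else 0) ≤ ENNReal.ofReal (2*y) := by
  rcases le_or_gt y 0 with hy | hy
  · have h0 : ∀ n : ℤ, (if (2:ℝ)^n < y then (2:ℝ≥0∞)^n else 0) = 0 := fun n =>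
      if_neg (not_lt.2 (hy.trans (zpow_pos (show (0:ℝ) < 2 by norm_num) n).le))
    simp [h0]
  · obtain ⟨n₀, h1, h2⟩ := exists_mem_Ioc_zpow hy one_lt_two
    set g : ℤ → ℝ≥0∞ := fun n => if (2:ℝ)^n < y then (2:ℝ≥0∞)^n else 0 with hg
    have hgle : ∀ k : ℕ, g (n₀ - k) ≤ (2:ℝ≥0∞)^n₀ * 2⁻¹^k := by
      intro k
      rw [hg]
      dsimp only
      split
      · rw [sub_eq_add_neg, ENNReal.zpow_add (by norm_num) (by norm_num),
          ENNReal.zpow_neg, zpow_natCast, ← ENNReal.inv_pow]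
      · exact zero_le
    have hneg' : ∀ m : ℤ, n₀ < m → g m = 0 := by
      intro m hm
      rw [hg]
      dsimp only
      apply if_neg
      have : (2:ℝ)^(n₀+1) ≤ (2:ℝ)^m := zpow_le_zpow_right₀ (by norm_num) (by omega)
      exact not_lt.2 (h2.trans this)
    calc ∑' n : ℤ, g n = ∑' m : ℤ, g ((Equiv.subLeft n₀) m) := ((Equiv.subLeft n₀).tsum_eq g).symm
      _ = ∑' m : ℤ, g (n₀ - m) := tsum_congr fun m => by rw [Equiv.subLeft_apply]
      _ = (∑' k : ℕ, g (n₀ - k)) + 0 := by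
          rw [tsum_of_nat_of_neg_add_one (f := fun m : ℤ => g (n₀ - m))
            ENNReal.summable ENNReal.summable]
          congr 1
          exact ENNReal.tsum_eq_zero.2 fun k => hneg' _ (by omega)
      _ = ∑' k : ℕ, g (n₀ - k) := add_zero _
      _ ≤ ∑' k : ℕ, (2:ℝ≥0∞)^n₀ * 2⁻¹^k := ENNReal.tsum_le_tsum hgle
      _ = (2:ℝ≥0∞)^n₀ * (1 - 2⁻¹)⁻¹ := by rw [ENNReal.tsum_mul_left, ENNReal.tsum_geometric]
      _ = (2:ℝ≥0∞)^n₀ * 2 := by rw [ENNReal.one_sub_inv_two]; norm_num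
      _ ≤ ENNReal.ofReal y * 2 := by
          gcongr
          rw [← ofReal_two_zpow]
          exact ENNReal.ofReal_le_ofReal h1.le
      _ = ENNReal.ofReal (2*y) := by
          rw [ENNReal.ofReal_mul (by norm_num)]
          rw [ENNReal.ofReal_ofNat, mul_comm]

private lemma tsum_count_cond_le (Nr y : ℝ) (hN : 2 ≤ Nr) :
    ∑' n : ℤ, (if ((2:ℝ)^n < y ∧ y ≤ Nr * 2^n) then (1:ℝ≥0∞) else 0)
      ≤ ENNReal.ofReal (3 * Real.logb 2 Nr) := by
  have hN0 : (0:ℝ) < Nr := by linarith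
  have hL : 1 ≤ Real.logb 2 Nr := by
    rw [Real.le_logb_iff_rpow_le one_lt_two hN0]
    simpa using hN
  rcases le_or_gt y 0 with hy | hy
  · have h0 : ∀ n : ℤ, (if ((2:ℝ)^n < y ∧ y ≤ Nr * 2^n) then (1:ℝ≥0∞) else 0) = 0 := fun n =>
      if_neg (fun h => absurd h.1 (not_lt.2 (hy.trans (zpow_pos (show (0:ℝ) < 2 by norm_num) n).le)))
    simp [h0]
  · obtain ⟨n₀, h1, h2⟩ := exists_mem_Ioc_zpow hy one_lt_two
    set K : ℤ := ⌊Real.logb 2 Nr⌋ with hK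
    have hKle : (K:ℝ) ≤ Real.logb 2 Nr := Int.floor_le _
    have hK1 : 1 ≤ K := by
      rw [hK, Int.le_floor]
      simpa using hL
    have hsub : ∀ n : ℤ, ((2:ℝ)^n < y ∧ y ≤ Nr * 2^n) → n ∈ Finset.Icc (n₀ - K) n₀ := by
      rintro n ⟨hc1, hc2⟩
      rw [Finset.mem_Icc]
      constructor
      · have hlt : (2:ℝ)^(n₀ - n) < Nr := by
          rw [zpow_sub₀ (by norm_num : (2:ℝ) ≠ 0), div_lt_iff₀ (zpow_pos (by norm_num) n)]
          calc (2:ℝ)^n₀ < y := h1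
            _ ≤ Nr * 2^n := hc2
        have hlog : ((n₀ - n : ℤ):ℝ) < Real.logb 2 Nr := by
          rw [Real.lt_logb_iff_rpow_lt one_lt_two hN0, Real.rpow_intCast]
          exact hlt
        have : n₀ - n ≤ K := Int.le_floor.2 hlog.le
        omega
      · have : (2:ℝ)^n < (2:ℝ)^(n₀+1) := lt_of_lt_of_le hc1 h2
        have := (zpow_lt_zpow_iff_right₀ (show (1:ℝ) < 2 by norm_num)).1 this
        omega
    calc ∑' n : ℤ, (if ((2:ℝ)^n < y ∧ y ≤ Nr * 2^n) then (1:ℝ≥0∞) else 0)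
        ≤ ∑' n : ℤ, (if n ∈ Finset.Icc (n₀ - K) n₀ then (1:ℝ≥0∞) else 0) := by
          apply ENNReal.tsum_le_tsum
          intro n
          by_cases h : ((2:ℝ)^n < y ∧ y ≤ Nr * 2^n)
          · rw [if_pos h, if_pos (hsub n h)]
          · rw [if_neg h]; exact zero_le
      _ = ∑ n ∈ Finset.Icc (n₀ - K) n₀, (if n ∈ Finset.Icc (n₀ - K) n₀ then (1:ℝ≥0∞) else 0) :=
          tsum_eq_sum (fun b hb => if_neg hb)
      _ = ∑ n ∈ Finset.Icc (n₀ - K) n₀, (1:ℝ≥0∞) :=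
          Finset.sum_congr rfl (fun x hx => if_pos hx)
      _ = ((Finset.Icc (n₀ - K) n₀).card : ℝ≥0∞) := by
          rw [Finset.sum_const, nsmul_eq_mul, mul_one]
      _ ≤ ENNReal.ofReal (3 * Real.logb 2 Nr) := by
          have hcard : (Finset.Icc (n₀ - K) n₀).card = (K+1).toNat := by
            rw [Int.card_Icc]
            congr 1
            omega
          rw [hcard, ← ENNReal.ofReal_natCast]
          apply ENNReal.ofReal_le_ofReal
          have h1' : ((K+1).toNat : ℝ) = (K:ℝ) + 1 := by
            rw [show ((K+1).toNat : ℝ) = (((K+1).toNat : ℤ) : ℝ) by push_cast; ring,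
              Int.toNat_of_nonneg (by omega)]
            push_cast; ring
          rw [h1']
          have hK1' : (1:ℝ) ≤ (K:ℝ) := by exact_mod_cast hK1
          linarith

theorem maximal_interpolation (a : ℕ) (ha : 1 ≤ a) (C : ℝ) (hC : 0 < C) :
    ∃ β C' : ℝ, 0 < β ∧ 0 < C' ∧
      ∀ N : ℝ, 2 ≤ N →
      ∀ T : (EuclideanSpace ℝ (Fin 2) → ℝ) → EuclideanSpace ℝ (Fin 2) → ℝ,
        (∀ f x, 0 ≤ T f x) →
        (∀ f g x, T (f + g) x ≤ T f x + T g x) →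
        (∀ (c : ℝ) f x, T (c • f) x = |c| * T f x) →
        (∀ f, MemLp f 2 volume → ∀ α : ℝ, 0 < α →
          volume {x | α < T f x} ≤
            ENNReal.ofReal (C * Real.logb 2 N ^ (2 * a + 1)) *
              (eLpNorm f 2 volume) ^ 2 / ENNReal.ofReal α ^ 2) →
        (∀ f, MemLp f 1 volume → ∀ α : ℝ, 0 < α →
          volume {x | α < T f x} ≤
            ENNReal.ofReal (C * N) * eLpNorm f 1 volume / ENNReal.ofReal α) →
        (∀ f, eLpNorm (T f) ⊤ volume ≤ eLpNorm f ⊤ volume) →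
        ∀ f, MemLp f 2 volume →
          eLpNorm (T f) 2 volume ≤
            ENNReal.ofReal (C' * Real.logb 2 N ^ β) * eLpNorm f 2 volume := by
  refine ⟨(a:ℝ)+1, Real.sqrt (180*C), by positivity, Real.sqrt_pos.2 (by linarith), ?_⟩
  intro N hN T hpos hsubadd hsmul hweak2 hweak1 hinf f hf
  have hN0 : (0:ℝ) < N := by linarith
  have hL1 : 1 ≤ Real.logb 2 N := by
    rw [Real.le_logb_iff_rpow_le one_lt_two hN0]
    simpa using hN
  set μ : Measure (EuclideanSpace ℝ (Fin 2)) := volume with hμ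
  set L : ℝ := C * Real.logb 2 N ^ (2*a+1) with hLdef
  have hLpos : 0 < L := by positivity
  have hfae : AEMeasurable f μ := hf.1.aemeasurable
  -- truncations
  set f1 : ℤ → EuclideanSpace ℝ (Fin 2) → ℝ :=
    fun n x => if N * (2:ℝ)^n < |f x| then f x else 0 with hf1def
  set f2 : ℤ → EuclideanSpace ℝ (Fin 2) → ℝ :=
    fun n x => if ((2:ℝ)^n < |f x| ∧ |f x| ≤ N * (2:ℝ)^n) then f x else 0 with hf2def
  set f3 : ℤ → EuclideanSpace ℝ (Fin 2) → ℝ :=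
    fun n x => if |f x| ≤ (2:ℝ)^n then f x else 0 with hf3def
  have h2pow : ∀ n : ℤ, (0:ℝ) < (2:ℝ)^n := fun n => zpow_pos (by norm_num) n
  have hm1 : ∀ n : ℤ, AEStronglyMeasurable (f1 n) μ := by
    intro n
    have hmeas : Measurable fun y : ℝ => if N * (2:ℝ)^n < |y| then y else 0 :=
      Measurable.ite (measurableSet_lt measurable_const continuous_abs.measurable)
        measurable_id measurable_const
    exact (hmeas.comp_aemeasurable hfae).aestronglyMeasurable
  have hm2 : ∀ n : ℤ, AEStronglyMeasurable (f2 n) μ := by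
    intro n
    have hmeas : Measurable fun y : ℝ => if ((2:ℝ)^n < |y| ∧ |y| ≤ N * (2:ℝ)^n) then y else 0 := by
      apply Measurable.ite _ measurable_id measurable_const
      exact (measurableSet_lt measurable_const continuous_abs.measurable).inter
        (measurableSet_le continuous_abs.measurable measurable_const)
    exact (hmeas.comp_aemeasurable hfae).aestronglyMeasurable
  have hmem2 : ∀ n : ℤ, MemLp (f2 n) 2 μ := by
    intro n
    refine hf.of_le (hm2 n) (ae_of_all _ fun x => ?_)
    rw [hf2def]
    dsimp only
    split_ifs with h
    · exact le_rfl
    · simpa using norm_nonneg (f x)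
  have hmem1 : ∀ n : ℤ, MemLp (f1 n) 1 μ := by
    intro n
    have hα : (0:ℝ) < N * (2:ℝ)^n := by positivity
    have hg2 : MemLp (fun x => ‖f x‖ ^ ((2:ℝ≥0∞)).toReal) 1 μ :=
      hf.norm_rpow (by norm_num) (by norm_num)
    simp only [ENNReal.toReal_ofNat] at hg2
    have hg : MemLp (fun x => (N * (2:ℝ)^n)⁻¹ * ‖f x‖ ^ (2:ℝ)) 1 μ := hg2.const_mul _
    refine hg.of_le (hm1 n) (ae_of_all _ fun x => ?_)
    rw [hf1def]
    dsimp only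
    split_ifs with h
    · rw [Real.norm_eq_abs, Real.norm_eq_abs,
        abs_of_nonneg (by positivity : (0:ℝ) ≤ (N * (2:ℝ)^n)⁻¹ * |f x| ^ (2:ℝ)),
        Real.rpow_two, inv_mul_eq_div, le_div_iff₀ hα]
      nlinarith [abs_nonneg (f x)]
    · simp only [norm_zero]
      exact norm_nonneg _
  have hsplit : ∀ n : ℤ, f = f1 n + f2 n + f3 n := by
    intro n
    funext x
    have hle2 : (2:ℝ)^n ≤ N * (2:ℝ)^n := le_mul_of_one_le_left (h2pow n).le (by linarith)
    simp only [Pi.add_apply, hf1def, hf2def, hf3def]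
    rcases lt_or_ge ((2:ℝ)^n) |f x| with h2 | h2
    · rcases lt_or_ge (N * (2:ℝ)^n) |f x| with h1 | h1
      · rw [if_pos h1, if_neg (fun h => absurd h.2 (not_le.2 h1)), if_neg (not_le.2 h2)]
        ring
      · rw [if_neg (not_lt.2 h1), if_pos ⟨h2, h1⟩, if_neg (not_le.2 h2)]
        ring
    · rw [if_neg (not_lt.2 (h2.trans hle2)), if_neg (fun h => absurd h.1 (not_lt.2 h2)), if_pos h2]
      ring
  -- L∞ piece is killed
  have hW3 : ∀ n : ℤ, μ {x | (2:ℝ)^n < T (f3 n) x} = 0 := by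
    intro n
    have hb : eLpNormEssSup (f3 n) μ ≤ ENNReal.ofReal ((2:ℝ)^n) := by
      apply eLpNormEssSup_le_of_ae_bound (C := (2:ℝ)^n)
      apply ae_of_all
      intro x
      rw [hf3def]
      dsimp only
      split_ifs with h
      · rwa [Real.norm_eq_abs]
      · simpa using (h2pow n).le
    have hTb : eLpNorm (T (f3 n)) ⊤ μ ≤ ENNReal.ofReal ((2:ℝ)^n) := by
      refine (hinf (f3 n)).trans ?_
      rwa [eLpNorm_exponent_top]
    have hae : ∀ᵐ x ∂μ, ¬ ((2:ℝ)^n < T (f3 n) x) := by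
      have h1 := enorm_ae_le_eLpNormEssSup (T (f3 n)) μ
      filter_upwards [h1] with x hx
      have h2 : (‖T (f3 n) x‖₊ : ℝ≥0∞) ≤ ENNReal.ofReal ((2:ℝ)^n) := by
        refine hx.trans (le_trans ?_ hTb)
        rw [eLpNorm_exponent_top]
      rw [← enorm_eq_nnnorm, Real.enorm_eq_ofReal (hpos _ x)] at h2
      exact not_lt.2 ((ENNReal.ofReal_le_ofReal_iff (h2pow n).le).1 h2)
    rw [ae_iff] at hae
    simpa only [not_not] using hae
  -- squares of L² norms
  have hsq : ∀ g : EuclideanSpace ℝ (Fin 2) → ℝ,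
      eLpNorm g 2 μ = (∫⁻ x, (‖g x‖₊:ℝ≥0∞) * ‖g x‖₊ ∂μ) ^ (1/2:ℝ) := by
    intro g
    rw [eLpNorm_eq_lintegral_rpow_enorm_toReal (by norm_num) (by norm_num)]
    simp only [ENNReal.toReal_ofNat]
    congr 1
    apply lintegral_congr
    intro x
    rw [ENNReal.rpow_two, pow_two, enorm_eq_nnnorm]
  have hsqpow : ∀ g : EuclideanSpace ℝ (Fin 2) → ℝ,
      (eLpNorm g 2 μ)^2 = ∫⁻ x, (‖g x‖₊:ℝ≥0∞) * ‖g x‖₊ ∂μ := by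
    intro g
    rw [hsq g, ← ENNReal.rpow_natCast _ 2, ← ENNReal.rpow_mul]
    norm_num
  -- per level bound
  have hSn : ∀ n : ℤ, μ {x | 3*(2:ℝ)^n < T f x} ≤
      ENNReal.ofReal (C*N) * (∫⁻ x, (‖f1 n x‖₊:ℝ≥0∞) ∂μ) / (2:ℝ≥0∞)^n
      + ENNReal.ofReal L * (∫⁻ x, (‖f2 n x‖₊:ℝ≥0∞) * ‖f2 n x‖₊ ∂μ)
          / ((2:ℝ≥0∞)^n * (2:ℝ≥0∞)^n) := by
    intro n
    have hsubset : {x | 3*(2:ℝ)^n < T f x} ⊆ {x | (2:ℝ)^n < T (f1 n) x}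
        ∪ ({x | (2:ℝ)^n < T (f2 n) x} ∪ {x | (2:ℝ)^n < T (f3 n) x}) := by
      intro x hx
      simp only [Set.mem_setOf_eq, Set.mem_union]
      by_contra hcon
      push_neg at hcon
      obtain ⟨h1, h2, h3⟩ := hcon
      have hTle : T f x ≤ T (f1 n) x + T (f2 n) x + T (f3 n) x := by
        calc T f x = T (f1 n + f2 n + f3 n) x := by rw [← hsplit n]
          _ ≤ T (f1 n + f2 n) x + T (f3 n) x := hsubadd _ _ x
          _ ≤ T (f1 n) x + T (f2 n) x + T (f3 n) x := by
              have := hsubadd (f1 n) (f2 n) x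
              linarith
      simp only [Set.mem_setOf_eq] at hx
      linarith
    have step1 : μ {x | 3*(2:ℝ)^n < T f x} ≤
        μ {x | (2:ℝ)^n < T (f1 n) x} + (μ {x | (2:ℝ)^n < T (f2 n) x}
          + μ {x | (2:ℝ)^n < T (f3 n) x}) :=
      le_trans (measure_mono hsubset)
        (le_trans (measure_union_le _ _) (add_le_add le_rfl (measure_union_le _ _)))
    have step2 : μ {x | 3*(2:ℝ)^n < T f x} ≤
        ENNReal.ofReal (C*N) * eLpNorm (f1 n) 1 μ / ENNReal.ofReal ((2:ℝ)^n)
        + (ENNReal.ofReal L * (eLpNorm (f2 n) 2 μ)^2 / (ENNReal.ofReal ((2:ℝ)^n))^2 + 0) := by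
      refine step1.trans (add_le_add ?_ (add_le_add ?_ ?_))
      · exact hweak1 (f1 n) (hmem1 n) _ (h2pow n)
      · exact hweak2 (f2 n) (hmem2 n) _ (h2pow n)
      · exact le_of_eq (hW3 n)
    rw [add_zero, eLpNorm_one_eq_lintegral_enorm, hsqpow (f2 n), ofReal_two_zpow, pow_two]
      at step2
    exact step2
  -- measurable supersets of superlevel sets of T f
  choose t ht1 ht2 ht3 using fun n : ℤ => exists_measurable_superset μ {x | 3*(2:ℝ)^n < T f x}
  -- pointwise dyadic bound
  have hpt : ∀ x, (‖T f x‖₊:ℝ≥0∞) * ‖T f x‖₊ ≤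
      ∑' n : ℤ, (t n).indicator (fun _ => (36:ℝ≥0∞) * ((2:ℝ≥0∞)^n * (2:ℝ≥0∞)^n)) x := by
    intro x
    rcases eq_or_lt_of_le (hpos f x) with h0 | h0
    · rw [← h0]
      simp
    · obtain ⟨n₀, hlt, hle⟩ := exists_mem_Ioc_zpow (show (0:ℝ) < T f x / 3 by positivity)
        one_lt_two
      have hmem : x ∈ t n₀ := by
        apply ht1 n₀
        simp only [Set.mem_setOf_eq]
        rw [lt_div_iff₀ (by norm_num : (0:ℝ) < 3)] at hlt
        linarith
      have hTle : T f x ≤ 6 * (2:ℝ)^n₀ := by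
        rw [div_le_iff₀ (by norm_num : (0:ℝ) < 3)] at hle
        have h2 : (2:ℝ)^(n₀+1) = 2 * 2^n₀ := by
          rw [zpow_add_one₀ (by norm_num : (2:ℝ) ≠ 0)]
          ring
        rw [h2] at hle
        linarith
      calc (‖T f x‖₊:ℝ≥0∞) * ‖T f x‖₊
          = ENNReal.ofReal (T f x) * ENNReal.ofReal (T f x) := by
            rw [← enorm_eq_nnnorm, Real.enorm_eq_ofReal (hpos f x)]
        _ ≤ ENNReal.ofReal (6 * 2^n₀) * ENNReal.ofReal (6 * 2^n₀) := by
            gcongr <;> exact ENNReal.ofReal_le_ofReal hTle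
        _ = (36:ℝ≥0∞) * ((2:ℝ≥0∞)^n₀ * (2:ℝ≥0∞)^n₀) := by
            rw [ENNReal.ofReal_mul (by norm_num), ofReal_two_zpow, ENNReal.ofReal_ofNat]
            ring
        _ ≤ ∑' n : ℤ, (t n).indicator (fun _ => (36:ℝ≥0∞) * ((2:ℝ≥0∞)^n * (2:ℝ≥0∞)^n)) x := by
            have h := ENNReal.le_tsum (f := fun n : ℤ =>
              (t n).indicator (fun _ => (36:ℝ≥0∞) * ((2:ℝ≥0∞)^n * (2:ℝ≥0∞)^n)) x) n₀
            rwa [Set.indicator_of_mem hmem] at h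
  set J : ℝ≥0∞ := ∫⁻ x, (‖f x‖₊:ℝ≥0∞) * ‖f x‖₊ ∂μ with hJ
  -- first series
  have hTerm1 : ∑' n : ℤ, (36:ℝ≥0∞) * (2:ℝ≥0∞)^n
      * (ENNReal.ofReal (C*N) * ∫⁻ x, (‖f1 n x‖₊:ℝ≥0∞) ∂μ)
      ≤ 72 * ENNReal.ofReal C * J := by
    have hoN0 : ENNReal.ofReal N ≠ 0 := (ENNReal.ofReal_pos.2 hN0).ne'
    have hrearr : ∀ n : ℤ, (36:ℝ≥0∞) * (2:ℝ≥0∞)^n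
        * (ENNReal.ofReal (C*N) * ∫⁻ x, (‖f1 n x‖₊:ℝ≥0∞) ∂μ)
        = (36 * ENNReal.ofReal (C*N)) * ((2:ℝ≥0∞)^n * ∫⁻ x, (‖f1 n x‖₊:ℝ≥0∞) ∂μ) := by
      intro n; ring
    rw [tsum_congr hrearr, ENNReal.tsum_mul_left]
    have hSum1 : ∑' n : ℤ, (2:ℝ≥0∞)^n * ∫⁻ x, (‖f1 n x‖₊:ℝ≥0∞) ∂μ
        ≤ (2 * (ENNReal.ofReal N)⁻¹) * J := by
      have hswap : ∑' n : ℤ, (2:ℝ≥0∞)^n * ∫⁻ x, (‖f1 n x‖₊:ℝ≥0∞) ∂μ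
          = ∫⁻ x, ∑' n : ℤ, (2:ℝ≥0∞)^n * (‖f1 n x‖₊:ℝ≥0∞) ∂μ := by
        rw [lintegral_tsum (f := fun n x => (2:ℝ≥0∞)^n * (‖f1 n x‖₊:ℝ≥0∞)) (fun n => ((hm1 n).enorm.const_mul _))]
        exact tsum_congr fun n => (lintegral_const_mul'' _ (hm1 n).enorm).symm
      rw [hswap]
      have hpt1 : ∀ x, ∑' n : ℤ, (2:ℝ≥0∞)^n * (‖f1 n x‖₊:ℝ≥0∞)
          ≤ (2 * (ENNReal.ofReal N)⁻¹) * ((‖f x‖₊:ℝ≥0∞) * ‖f x‖₊) := by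
        intro x
        have hterm : ∀ n : ℤ, (2:ℝ≥0∞)^n * (‖f1 n x‖₊:ℝ≥0∞)
            = (‖f x‖₊:ℝ≥0∞) * (if (2:ℝ)^n < |f x| / N then (2:ℝ≥0∞)^n else 0) := by
          intro n
          have hiff : ((2:ℝ)^n < |f x| / N) ↔ (N * (2:ℝ)^n < |f x|) := by
            rw [lt_div_iff₀ hN0, mul_comm]
          rw [hf1def]
          dsimp only
          by_cases h : N * (2:ℝ)^n < |f x|
          · rw [if_pos h, if_pos (hiff.2 h), mul_comm]
          · rw [if_neg h, if_neg (fun hh => h (hiff.1 hh))]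
            simp
        rw [tsum_congr hterm, ENNReal.tsum_mul_left]
        calc (‖f x‖₊:ℝ≥0∞) * ∑' n : ℤ, (if (2:ℝ)^n < |f x| / N then (2:ℝ≥0∞)^n else 0)
            ≤ (‖f x‖₊:ℝ≥0∞) * ENNReal.ofReal (2 * (|f x| / N)) :=
              mul_le_mul_right (tsum_geom_cond_le _) _
          _ = (2 * (ENNReal.ofReal N)⁻¹) * ((‖f x‖₊:ℝ≥0∞) * ‖f x‖₊) := by
              rw [ENNReal.ofReal_mul (by norm_num), ENNReal.ofReal_div_of_pos hN0,
                ENNReal.ofReal_ofNat, div_eq_mul_inv, ← Real.enorm_eq_ofReal_abs, enorm_eq_nnnorm]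
              ring
      calc ∫⁻ x, ∑' n : ℤ, (2:ℝ≥0∞)^n * (‖f1 n x‖₊:ℝ≥0∞) ∂μ
          ≤ ∫⁻ x, (2 * (ENNReal.ofReal N)⁻¹) * ((‖f x‖₊:ℝ≥0∞) * ‖f x‖₊) ∂μ :=
            lintegral_mono hpt1
        _ = (2 * (ENNReal.ofReal N)⁻¹) * J := by
            rw [hJ]
            exact lintegral_const_mul'' _ (hfae.enorm.mul hfae.enorm)
    calc (36 * ENNReal.ofReal (C*N)) * ∑' n : ℤ, (2:ℝ≥0∞)^n * ∫⁻ x, (‖f1 n x‖₊:ℝ≥0∞) ∂μ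
        ≤ (36 * ENNReal.ofReal (C*N)) * ((2 * (ENNReal.ofReal N)⁻¹) * J) :=
          mul_le_mul_right hSum1 _
      _ = 72 * ENNReal.ofReal C * J * (ENNReal.ofReal N * (ENNReal.ofReal N)⁻¹) := by
          rw [ENNReal.ofReal_mul hC.le]
          ring
      _ = 72 * ENNReal.ofReal C * J := by
          rw [ENNReal.mul_inv_cancel hoN0 ENNReal.ofReal_ne_top, mul_one]
  -- second series
  have hTerm2 : ∑' n : ℤ, (36:ℝ≥0∞)
      * (ENNReal.ofReal L * ∫⁻ x, (‖f2 n x‖₊:ℝ≥0∞) * ‖f2 n x‖₊ ∂μ)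
      ≤ 108 * (ENNReal.ofReal L * ENNReal.ofReal (Real.logb 2 N)) * J := by
    have hrearr : ∀ n : ℤ, (36:ℝ≥0∞)
        * (ENNReal.ofReal L * ∫⁻ x, (‖f2 n x‖₊:ℝ≥0∞) * ‖f2 n x‖₊ ∂μ)
        = (36 * ENNReal.ofReal L) * ∫⁻ x, (‖f2 n x‖₊:ℝ≥0∞) * ‖f2 n x‖₊ ∂μ := by
      intro n; ring
    rw [tsum_congr hrearr, ENNReal.tsum_mul_left]
    have hSum2 : ∑' n : ℤ, ∫⁻ x, (‖f2 n x‖₊:ℝ≥0∞) * ‖f2 n x‖₊ ∂μ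
        ≤ ENNReal.ofReal (3 * Real.logb 2 N) * J := by
      rw [← lintegral_tsum (f := fun n x => (‖f2 n x‖₊:ℝ≥0∞) * ‖f2 n x‖₊) (fun n => ((hm2 n).enorm.mul (hm2 n).enorm))]
      have hpt2 : ∀ x, ∑' n : ℤ, (‖f2 n x‖₊:ℝ≥0∞) * ‖f2 n x‖₊
          ≤ ((‖f x‖₊:ℝ≥0∞) * ‖f x‖₊) * ENNReal.ofReal (3 * Real.logb 2 N) := by
        intro x
        have hterm : ∀ n : ℤ, (‖f2 n x‖₊:ℝ≥0∞) * ‖f2 n x‖₊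
            = ((‖f x‖₊:ℝ≥0∞) * ‖f x‖₊)
              * (if ((2:ℝ)^n < |f x| ∧ |f x| ≤ N * 2^n) then (1:ℝ≥0∞) else 0) := by
          intro n
          rw [hf2def]
          dsimp only
          by_cases h : ((2:ℝ)^n < |f x| ∧ |f x| ≤ N * 2^n)
          · rw [if_pos h, if_pos h, mul_one]
          · rw [if_neg h, if_neg h]
            simp
        rw [tsum_congr hterm, ENNReal.tsum_mul_left]
        exact mul_le_mul_right (tsum_count_cond_le N (|f x|) hN) _
      calc ∫⁻ x, ∑' n : ℤ, (‖f2 n x‖₊:ℝ≥0∞) * ‖f2 n x‖₊ ∂μ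
          ≤ ∫⁻ x, ((‖f x‖₊:ℝ≥0∞) * ‖f x‖₊) * ENNReal.ofReal (3 * Real.logb 2 N) ∂μ :=
            lintegral_mono hpt2
        _ = J * ENNReal.ofReal (3 * Real.logb 2 N) := by
            rw [hJ]
            exact lintegral_mul_const'' _ (hfae.enorm.mul hfae.enorm)
        _ = ENNReal.ofReal (3 * Real.logb 2 N) * J := mul_comm _ _
    calc (36 * ENNReal.ofReal L) * ∑' n : ℤ, ∫⁻ x, (‖f2 n x‖₊:ℝ≥0∞) * ‖f2 n x‖₊ ∂μ
        ≤ (36 * ENNReal.ofReal L) * (ENNReal.ofReal (3 * Real.logb 2 N) * J) :=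
          mul_le_mul_right hSum2 _
      _ = 108 * (ENNReal.ofReal L * ENNReal.ofReal (Real.logb 2 N)) * J := by
          rw [ENNReal.ofReal_mul (by norm_num : (0:ℝ) ≤ 3), ENNReal.ofReal_ofNat]
          ring
  -- main estimate
  have hmain : ∫⁻ x, (‖T f x‖₊:ℝ≥0∞) * ‖T f x‖₊ ∂μ
      ≤ ENNReal.ofReal (180 * C * Real.logb 2 N ^ (2*a+2)) * J := by
    calc ∫⁻ x, (‖T f x‖₊:ℝ≥0∞) * ‖T f x‖₊ ∂μ
        ≤ ∫⁻ x, ∑' n : ℤ, (t n).indicator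
            (fun _ => (36:ℝ≥0∞) * ((2:ℝ≥0∞)^n * (2:ℝ≥0∞)^n)) x ∂μ := lintegral_mono hpt
      _ = ∑' n : ℤ, (36:ℝ≥0∞) * ((2:ℝ≥0∞)^n * (2:ℝ≥0∞)^n) * μ (t n) := by
          rw [lintegral_tsum (fun n => (measurable_const.indicator (ht2 n)).aemeasurable)]
          exact tsum_congr fun n => lintegral_indicator_const (ht2 n) _
      _ = ∑' n : ℤ, (36:ℝ≥0∞) * ((2:ℝ≥0∞)^n * (2:ℝ≥0∞)^n) * μ {x | 3*(2:ℝ)^n < T f x} :=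
          tsum_congr fun n => by rw [ht3 n]
      _ ≤ ∑' n : ℤ, ((36:ℝ≥0∞) * (2:ℝ≥0∞)^n
            * (ENNReal.ofReal (C*N) * ∫⁻ x, (‖f1 n x‖₊:ℝ≥0∞) ∂μ)
          + (36:ℝ≥0∞) * (ENNReal.ofReal L * ∫⁻ x, (‖f2 n x‖₊:ℝ≥0∞) * ‖f2 n x‖₊ ∂μ)) := by
          apply ENNReal.tsum_le_tsum
          intro n
          have h2n0 : ((2:ℝ≥0∞)^n) ≠ 0 := (ENNReal.zpow_pos (by norm_num) (by norm_num) n).ne'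
          have h2nt : ((2:ℝ≥0∞)^n) ≠ ∞ := (ENNReal.zpow_lt_top (by norm_num) (by norm_num) n).ne
          set s : ℝ≥0∞ := (2:ℝ≥0∞)^n with hs
          set A : ℝ≥0∞ := ENNReal.ofReal (C*N) * ∫⁻ x, (‖f1 n x‖₊:ℝ≥0∞) ∂μ with hA
          set B : ℝ≥0∞ := ENNReal.ofReal L * ∫⁻ x, (‖f2 n x‖₊:ℝ≥0∞) * ‖f2 n x‖₊ ∂μ with hB
          calc (36:ℝ≥0∞) * (s * s) * μ {x | 3*(2:ℝ)^n < T f x}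
              ≤ (36:ℝ≥0∞) * (s * s) * (A / s + B / (s * s)) := mul_le_mul_right (hSn n) _
            _ = 36 * s * A + 36 * B := by
                have e1 : (36:ℝ≥0∞) * (s * s) * (A * s⁻¹) = 36 * s * A * (s * s⁻¹) := by ring
                have e2 : (36:ℝ≥0∞) * (s * s) * (B * (s * s)⁻¹)
                    = 36 * B * (s * s * (s * s)⁻¹) := by ring
                rw [div_eq_mul_inv, div_eq_mul_inv, mul_add, e1, e2,
                  ENNReal.mul_inv_cancel h2n0 h2nt,
                  ENNReal.mul_inv_cancel (mul_ne_zero h2n0 h2n0) (ENNReal.mul_ne_top h2nt h2nt),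
                  mul_one, mul_one]
      _ = (∑' n : ℤ, (36:ℝ≥0∞) * (2:ℝ≥0∞)^n
            * (ENNReal.ofReal (C*N) * ∫⁻ x, (‖f1 n x‖₊:ℝ≥0∞) ∂μ))
          + ∑' n : ℤ, (36:ℝ≥0∞)
            * (ENNReal.ofReal L * ∫⁻ x, (‖f2 n x‖₊:ℝ≥0∞) * ‖f2 n x‖₊ ∂μ) := ENNReal.tsum_add
      _ ≤ 72 * ENNReal.ofReal C * J
          + 108 * (ENNReal.ofReal L * ENNReal.ofReal (Real.logb 2 N)) * J :=
          add_le_add hTerm1 hTerm2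
      _ ≤ ENNReal.ofReal (180 * C * Real.logb 2 N ^ (2*a+2)) * J := by
          have hcoef : 72 * ENNReal.ofReal C
              + 108 * (ENNReal.ofReal L * ENNReal.ofReal (Real.logb 2 N))
              ≤ ENNReal.ofReal (180 * C * Real.logb 2 N ^ (2*a+2)) := by
            have e1 : (72:ℝ≥0∞) * ENNReal.ofReal C = ENNReal.ofReal (72 * C) := by
              rw [ENNReal.ofReal_mul (by norm_num : (0:ℝ) ≤ 72), ENNReal.ofReal_ofNat]
            have e2 : (108:ℝ≥0∞) * (ENNReal.ofReal L * ENNReal.ofReal (Real.logb 2 N))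
                = ENNReal.ofReal (108 * (L * Real.logb 2 N)) := by
              rw [ENNReal.ofReal_mul (by norm_num : (0:ℝ) ≤ 108),
                ENNReal.ofReal_mul (by positivity : (0:ℝ) ≤ L), ENNReal.ofReal_ofNat]
            rw [e1, e2, ← ENNReal.ofReal_add (by positivity) (by positivity)]
            apply ENNReal.ofReal_le_ofReal
            have hLL : L * Real.logb 2 N = C * Real.logb 2 N ^ (2*a+2) := by
              rw [hLdef]
              rw [show 2*a+2 = (2*a+1)+1 by ring, pow_succ]
              ring
            rw [hLL]
            have hp : (1:ℝ) ≤ Real.logb 2 N ^ (2*a+2) := one_le_pow₀ hL1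
            nlinarith [hC.le]
          calc 72 * ENNReal.ofReal C * J
              + 108 * (ENNReal.ofReal L * ENNReal.ofReal (Real.logb 2 N)) * J
              = (72 * ENNReal.ofReal C
                + 108 * (ENNReal.ofReal L * ENNReal.ofReal (Real.logb 2 N))) * J := by
                rw [add_mul]
            _ ≤ ENNReal.ofReal (180 * C * Real.logb 2 N ^ (2*a+2)) * J :=
                mul_le_mul_left hcoef _
  -- conclude
  have hhalf : (0:ℝ) ≤ 1/2 := by norm_num
  calc eLpNorm (T f) 2 μ = (∫⁻ x, (‖T f x‖₊:ℝ≥0∞) * ‖T f x‖₊ ∂μ) ^ (1/2:ℝ) := hsq (T f)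
    _ ≤ (ENNReal.ofReal (180 * C * Real.logb 2 N ^ (2*a+2)) * J) ^ (1/2:ℝ) :=
        ENNReal.rpow_le_rpow hmain hhalf
    _ = (ENNReal.ofReal (180 * C * Real.logb 2 N ^ (2*a+2))) ^ (1/2:ℝ) * J ^ (1/2:ℝ) :=
        ENNReal.mul_rpow_of_nonneg _ _ hhalf
    _ = ENNReal.ofReal (Real.sqrt (180*C) * Real.logb 2 N ^ ((a:ℝ)+1)) * eLpNorm f 2 μ := by
        rw [hsq f, ← hJ]
        congr 1
        rw [ENNReal.ofReal_rpow_of_pos (by positivity)]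
        congr 1
        rw [← Real.sqrt_eq_rpow]
        have efact : (180 * C * Real.logb 2 N ^ (2*a+2))
            = (180*C) * (Real.logb 2 N ^ (a+1))^2 := by
          rw [← pow_mul]
          ring_nf
        have ecast : ((a:ℝ)+1) = ((a+1:ℕ):ℝ) := by push_cast; ring
        rw [efact, Real.sqrt_mul (by positivity), Real.sqrt_sq (by positivity),
          ecast, Real.rpow_natCast]
end
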